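/- arXiv:2204.08231 — 3 statements merged into one kernel-verified Lean document; each statement's English description precedes it below -/
import Mathlib

section
/- The function s ↦ s / (1 + C s^((α-1)/2) t)^(2/(α-1)) is monotone increasing on [0, ∞) for every fixed t ≥ 0, C ≥ 0 and α > 1. -/
open Real

/-- The function s ↦ s / (1 + C s^((α-1)/2) t)^(2/(α-1)) is monotone increasing on [0,∞)
for fixed t ≥ 0, C ≥ 0 and α > 1. -/
theorem mono_decay_profile (α C t : ℝ) (hα : 1 < α) (hC : 0 ≤ C) (ht : 0 ≤ t) :
    MonotoneOn (fun s : ℝ => s / (1 + C * s ^ ((α - 1) / 2) * t) ^ (2 / (α - 1)))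
      (Set.Ici (0 : ℝ)) := by
  intro a ha b hb hab
  simp only [Set.mem_Ici] at ha hb
  have hα1 : 0 < α - 1 := by linarith
  set p := (α - 1) / 2 with hp
  set q := 2 / (α - 1) with hq
  have hp0 : 0 < p := by positivity
  have hq0 : 0 < q := by positivity
  have hu : (0:ℝ) ≤ a ^ p := Real.rpow_nonneg ha p
  have hv : (0:ℝ) ≤ b ^ p := Real.rpow_nonneg hb p
  have huv : a ^ p ≤ b ^ p := Real.rpow_le_rpow ha hab hp0.le
  have hden_u : (0:ℝ) < 1 + C * a ^ p * t := by positivity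
  have hden_v : (0:ℝ) < 1 + C * b ^ p * t := by positivity
  have hdiv : a ^ p / (1 + C * a ^ p * t) ≤ b ^ p / (1 + C * b ^ p * t) := by
    rw [div_le_div_iff₀ hden_u hden_v]
    nlinarith [mul_nonneg (mul_nonneg (mul_nonneg hC hu) hv) ht]
  have key : (a ^ p / (1 + C * a ^ p * t)) ^ q ≤ (b ^ p / (1 + C * b ^ p * t)) ^ q :=
    Real.rpow_le_rpow (by positivity) hdiv hq0.le
  rw [Real.div_rpow hu hden_u.le, Real.div_rpow hv hden_v.le] at key
  have hpq : p * q = 1 := by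
    rw [hp, hq]; field_simp
  have ha' : (a ^ p) ^ q = a := by
    rw [← Real.rpow_mul ha, hpq, Real.rpow_one]
  have hb' : (b ^ p) ^ q = b := by
    rw [← Real.rpow_mul hb, hpq, Real.rpow_one]
  rw [ha', hb'] at key
  exact key
end

section
/- Let Ω ⊂ ℝ be a bounded open interval and let 0 < α < 1. If v ∈ H¹(Ω) ∩ W³_{α+1}(Ω) satisfies ∫_Ω v dx = 0, v' = 0 on ∂Ω, and v''' = 0 on ∂Ω, then there exists C > 0 depending only on α and Ω such that (1/2)∫_Ω |v'|² dx ≤ C ‖v'''‖²_{L_{α+1}(Ω)}. -/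
open Real

private lemma pt_bound {g : ℝ → ℝ} {a b c x : ℝ} (hab : a ≤ b)
    (hg : Differentiable ℝ g) (hg' : Continuous (deriv g))
    (hc : c ∈ Set.Icc a b) (hgc : g c = 0) (hx : x ∈ Set.Icc a b) :
    |g x| ≤ ∫ t in a..b, |deriv g t| := by
  have h1 : ∫ t in c..x, deriv g t = g x - g c :=
    intervalIntegral.integral_deriv_eq_sub (fun t _ => hg t) (hg'.intervalIntegrable _ _)
  have hsub : Set.uIoc c x ⊆ Set.uIoc a b := by
    rw [Set.uIoc_of_le hab]
    rintro t ⟨h1t, h2t⟩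
    exact ⟨lt_of_le_of_lt (le_min hc.1 hx.1) h1t, le_trans h2t (max_le hc.2 hx.2)⟩
  calc |g x| = |∫ t in c..x, deriv g t| := by rw [h1, hgc, sub_zero]
    _ ≤ |(∫ t in c..x, |deriv g t|)| := by
        simpa [Real.norm_eq_abs] using
          intervalIntegral.norm_integral_le_abs_integral_norm (f := deriv g) (a := c) (b := x)
    _ ≤ |(∫ t in a..b, |deriv g t|)| :=
        intervalIntegral.abs_integral_mono_interval hsub
          (Filter.Eventually.of_forall fun t => abs_nonneg _)
          ((hg'.abs).intervalIntegrable a b)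
    _ = ∫ t in a..b, |deriv g t| :=
        abs_of_nonneg (intervalIntegral.integral_nonneg hab fun t _ => abs_nonneg _)

private lemma int_le_const {f : ℝ → ℝ} {a b M : ℝ} (hab : a ≤ b)
    (hf : IntervalIntegrable f MeasureTheory.volume a b)
    (hM : ∀ x ∈ Set.Icc a b, f x ≤ M) :
    ∫ x in a..b, f x ≤ (b - a) * M := by
  have := intervalIntegral.integral_mono_on hab hf intervalIntegrable_const hM
  simpa [smul_eq_mul] using this

/-- Higher-order Poincaré estimate, case 0 < α < 1: on a bounded interval Ω = (a,b),
for v with mean zero, v' = 0 and v''' = 0 at the boundary,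
E[v] = (1/2)∫|v'|² ≤ C ‖v'''‖²_{L_{α+1}}. -/
theorem poincare_higher_order_alpha_lt_one (a b α : ℝ) (hab : a < b) (hα0 : 0 < α) (hα1 : α < 1) :
    ∃ C > 0, ∀ v : ℝ → ℝ, ContDiff ℝ 3 v →
      (∫ x in a..b, v x) = 0 →
      deriv v a = 0 → deriv v b = 0 →
      iteratedDeriv 3 v a = 0 → iteratedDeriv 3 v b = 0 →
      (1 / 2) * (∫ x in a..b, (deriv v x) ^ 2)
        ≤ C * ((∫ x in a..b, |iteratedDeriv 3 v x| ^ (α + 1)) ^ (2 / (α + 1))) := by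
  set L := b - a with hLdef
  have hL : 0 < L := by simp [hLdef]; linarith
  have hLne : L ≠ 0 := ne_of_gt hL
  have hα1' : (0:ℝ) < α + 1 := by linarith
  refine ⟨(L ^ 3) * (L ^ 2 * (L⁻¹) ^ (2 / (α + 1))), by positivity, ?_⟩
  intro v hv _ h1a h1b _ _
  -- derivative bookkeeping
  have hv' : Differentiable ℝ v ∧ ContDiff ℝ 2 (deriv v) := by
    have := contDiff_succ_iff_deriv.mp (show ContDiff ℝ (2 + 1) v from by exact_mod_cast hv)
    exact ⟨this.1, this.2.2⟩
  have hv'' : Differentiable ℝ (deriv v) ∧ ContDiff ℝ 1 (deriv (deriv v)) := by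
    have := contDiff_succ_iff_deriv.mp (show ContDiff ℝ (1 + 1) (deriv v) from by exact_mod_cast hv'.2)
    exact ⟨this.1, this.2.2⟩
  have hv''' : Differentiable ℝ (deriv (deriv v)) ∧ Continuous (deriv (deriv (deriv v))) :=
    contDiff_one_iff_deriv.mp hv''.2
  set v1 := deriv v with hv1def
  set v2 := deriv v1 with hv2def
  set v3 := deriv v2 with hv3def
  have hit : iteratedDeriv 3 v = v3 := by
    simp [hv3def, hv2def, hv1def, iteratedDeriv_succ, iteratedDeriv_zero]
  have hv1c : Continuous v1 := hv'.2.continuous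
  have hv2c : Continuous v2 := hv''.2.continuous
  have hv3c : Continuous v3 := hv'''.2
  set A := ∫ t in a..b, |v3 t| with hAdef
  set N := ∫ x in a..b, |v3 x| ^ (α + 1) with hNdef
  have hA0 : 0 ≤ A := intervalIntegral.integral_nonneg hab.le fun t _ => abs_nonneg _
  have hN0 : 0 ≤ N := intervalIntegral.integral_nonneg hab.le fun t _ => by positivity
  -- Rolle: v2 vanishes somewhere
  obtain ⟨c1, hc1, hc1z⟩ : ∃ c ∈ Set.Ioo a b, deriv v1 c = 0 :=
    exists_deriv_eq_zero hab (hv1c.continuousOn) (by rw [h1a, h1b])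
  -- pointwise bound on v2
  have hbd2 : ∀ x ∈ Set.Icc a b, |v2 x| ≤ A := fun x hx =>
    pt_bound hab.le hv'''.1 hv'''.2 (Set.mem_Icc_of_Ioo hc1) hc1z hx
  -- integral bound on |v2|
  have hint2 : (∫ t in a..b, |v2 t|) ≤ L * A := by
    have := int_le_const hab.le ((hv2c.abs).intervalIntegrable a b) hbd2
    simpa [hLdef] using this
  -- pointwise bound on v1
  have hbd1 : ∀ x ∈ Set.Icc a b, |v1 x| ≤ L * A := fun x hx =>
    le_trans (pt_bound hab.le hv''.1 hv2c (Set.left_mem_Icc.mpr hab.le) h1a hx) hint2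
  -- integral bound on v1^2
  have hI : (∫ x in a..b, v1 x ^ 2) ≤ L * (L * A) ^ 2 := by
    have := int_le_const hab.le ((hv1c.pow 2).intervalIntegrable a b)
      (fun x hx => by
        have := hbd1 x hx
        calc v1 x ^ 2 = |v1 x| ^ 2 := (sq_abs _).symm
          _ ≤ (L * A) ^ 2 := by
              apply pow_le_pow_left₀ (abs_nonneg _) this)
    simpa [hLdef] using this
  have hInn : 0 ≤ ∫ x in a..b, v1 x ^ 2 :=
    intervalIntegral.integral_nonneg hab.le fun t _ => sq_nonneg _
  -- Jensen / Hölder step : (L⁻¹ * A) ^ (α+1) ≤ L⁻¹ * N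
  have jensen : (L⁻¹ * A) ^ (α + 1) ≤ L⁻¹ * N := by
    set μ := MeasureTheory.volume.restrict (Set.Ioc a b) with hμdef
    have hμuniv : μ Set.univ = ENNReal.ofReal L := by
      rw [hμdef, MeasureTheory.Measure.restrict_apply_univ, Real.volume_Ioc]
    haveI : MeasureTheory.IsFiniteMeasure μ := ⟨by rw [hμuniv]; exact ENNReal.ofReal_lt_top⟩
    haveI : NeZero μ := ⟨by
      intro h
      rw [h] at hμuniv
      simp [ENNReal.ofReal_eq_zero] at hμuniv
      linarith⟩
    have hgc : Continuous fun t : ℝ => t ^ (α + 1) := Real.continuous_rpow_const (by linarith)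
    have hfi : MeasureTheory.Integrable (fun x => |v3 x|) μ :=
      (hv3c.abs).integrableOn_Ioc
    have hgi : MeasureTheory.Integrable ((fun t : ℝ => t ^ (α + 1)) ∘ fun x => |v3 x|) μ :=
      ((hgc.comp hv3c.abs)).integrableOn_Ioc
    have hJ := (convexOn_rpow (p := α + 1) (by linarith)).map_average_le
      hgc.continuousOn isClosed_Ici
      (Filter.Eventually.of_forall fun x => Set.mem_Ici.mpr (abs_nonneg (v3 x))) hfi hgi
    have hAv : (⨍ x, |v3 x| ∂μ) = L⁻¹ * A := by
      rw [MeasureTheory.average_eq, MeasureTheory.measureReal_def, hμuniv, ENNReal.toReal_ofReal hL.le, smul_eq_mul, hAdef,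
        intervalIntegral.integral_of_le hab.le]
    have hAv2 : (⨍ x, |v3 x| ^ (α + 1) ∂μ) = L⁻¹ * N := by
      rw [MeasureTheory.average_eq, MeasureTheory.measureReal_def, hμuniv, ENNReal.toReal_ofReal hL.le, smul_eq_mul, hNdef,
        intervalIntegral.integral_of_le hab.le]
    rw [hAv, hAv2] at hJ
    exact hJ
  -- convert the Jensen estimate to a bound on A^2
  have ht0 : 0 ≤ L⁻¹ * A := by positivity
  have hA2 : A ^ 2 ≤ L ^ 2 * ((L⁻¹) ^ (2 / (α + 1)) * N ^ (2 / (α + 1))) := by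
    have e1 : ((L⁻¹ * A) ^ (α + 1)) ^ (2 / (α + 1)) = (L⁻¹ * A) ^ (2 : ℕ) := by
      rw [← Real.rpow_natCast (L⁻¹ * A) 2, ← Real.rpow_mul ht0]
      congr 1
      field_simp
      norm_num
    have e2 : ((L⁻¹ * A) ^ (α + 1)) ^ (2 / (α + 1)) ≤ (L⁻¹ * N) ^ (2 / (α + 1)) :=
      Real.rpow_le_rpow (Real.rpow_nonneg ht0 _) jensen (by positivity)
    have e3 : (L⁻¹ * N) ^ (2 / (α + 1)) = (L⁻¹) ^ (2 / (α + 1)) * N ^ (2 / (α + 1)) :=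
      Real.mul_rpow (by positivity) hN0
    have e4 : (L⁻¹ * A) ^ (2 : ℕ) ≤ (L⁻¹) ^ (2 / (α + 1)) * N ^ (2 / (α + 1)) := by
      rw [← e1]; rw [e3] at e2; exact e2
    have e5 : A ^ 2 = L ^ 2 * (L⁻¹ * A) ^ (2 : ℕ) := by
      field_simp
    rw [e5]
    exact mul_le_mul_of_nonneg_left e4 (by positivity)
  -- conclude
  rw [hit]
  calc (1 / 2) * (∫ x in a..b, v1 x ^ 2) ≤ ∫ x in a..b, v1 x ^ 2 := by linarith
    _ ≤ L * (L * A) ^ 2 := hI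
    _ = L ^ 3 * A ^ 2 := by ring
    _ ≤ L ^ 3 * (L ^ 2 * ((L⁻¹) ^ (2 / (α + 1)) * N ^ (2 / (α + 1)))) :=
        mul_le_mul_of_nonneg_left hA2 (by positivity)
    _ = (L ^ 3) * (L ^ 2 * (L⁻¹) ^ (2 / (α + 1))) * N ^ (2 / (α + 1)) := by ring
end

section
/- Let m > 0, α > 0 and Ω ⊂ ℝ a bounded interval. If u ∈ W³_{α+1}(Ω) satisfies u(x) ≥ m for all x ∈ Ω, then ∫_Ω u^{α+2} |u'''|^{α+1} dx ≥ m^{α+2} ‖u'''‖^{α+1}_{L_{α+1}(Ω)}; combined with the Poincaré estimate E[u − ū] ≤ C‖u'''‖²_{L_{α+1}(Ω)} for mean-zero deviations with u' = u''' = 0 on ∂Ω, this gives D[u] ≥ C m^{α+2} (E[u − ū])^{(α+1)/2}, where ū is the mean of u, E[v] = (1/2)∫_Ω|v'|² dx, and D[u] = ∫_Ω u^{α+2}|u'''|^{α+1} dx. -/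
open Real

/-- Łojasiewicz–Simon type estimate: if u ≥ m > 0 on Ω̄ then
D[u] = ∫ u^{α+2}|u'''|^{α+1} ≥ m^{α+2}‖u'''‖^{α+1}_{L_{α+1}}, and combined with the
Poincaré estimate E[u − ū] ≤ C_P ‖u'''‖²_{L_{α+1}} one gets
D[u] ≥ C m^{α+2} (E[u − ū])^{(α+1)/2}, where E[u − ū] = (1/2)∫|u'|². -/
theorem lojasiewicz_simon_estimate (a b α m CP : ℝ) (hab : a < b) (hα : 0 < α)
    (hm : 0 < m) (hCP : 0 < CP) (u : ℝ → ℝ) (hu : ContDiff ℝ 3 u)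
    (hlb : ∀ x ∈ Set.Icc a b, m ≤ u x)
    (hbc1 : deriv u a = 0) (hbc2 : deriv u b = 0)
    (hbc3 : iteratedDeriv 3 u a = 0) (hbc4 : iteratedDeriv 3 u b = 0)
    (hP : (1 / 2) * (∫ x in a..b, (deriv u x) ^ 2)
        ≤ CP * ((∫ x in a..b, |iteratedDeriv 3 u x| ^ (α + 1)) ^ (2 / (α + 1)))) :
    m ^ (α + 2) * (∫ x in a..b, |iteratedDeriv 3 u x| ^ (α + 1))
        ≤ (∫ x in a..b, u x ^ (α + 2) * |iteratedDeriv 3 u x| ^ (α + 1)) ∧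
    ∃ C > 0, C * m ^ (α + 2) *
        ((1 / 2) * (∫ x in a..b, (deriv u x) ^ 2)) ^ ((α + 1) / 2)
      ≤ ∫ x in a..b, u x ^ (α + 2) * |iteratedDeriv 3 u x| ^ (α + 1) := by
  have hab' : a ≤ b := hab.le
  have hcf : Continuous (iteratedDeriv 3 u) :=
    hu.continuous_iteratedDeriv 3 (by norm_num)
  have hrpow1 : Continuous fun y : ℝ => y ^ (α + 1) :=
    continuous_iff_continuousAt.2 fun y =>
      Real.continuousAt_rpow_const y _ (Or.inr (by linarith))
  have hrpow2 : Continuous fun y : ℝ => y ^ (α + 2) :=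
    continuous_iff_continuousAt.2 fun y =>
      Real.continuousAt_rpow_const y _ (Or.inr (by linarith))
  have hc2 : Continuous fun x => |iteratedDeriv 3 u x| ^ (α + 1) :=
    hrpow1.comp hcf.abs
  have hc1 : Continuous fun x => u x ^ (α + 2) := hrpow2.comp hu.continuous
  set I := ∫ x in a..b, |iteratedDeriv 3 u x| ^ (α + 1) with hIdef
  set D := ∫ x in a..b, u x ^ (α + 2) * |iteratedDeriv 3 u x| ^ (α + 1) with hDdef
  set E := (1 / 2) * (∫ x in a..b, (deriv u x) ^ 2) with hEdef
  have h1 : m ^ (α + 2) * I ≤ D := by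
    rw [hIdef, ← intervalIntegral.integral_const_mul, hDdef]
    apply intervalIntegral.integral_mono_on hab'
      ((continuous_const.mul hc2).intervalIntegrable a b)
      ((hc1.mul hc2).intervalIntegrable a b)
    intro x hx
    exact mul_le_mul_of_nonneg_right
      (Real.rpow_le_rpow hm.le (hlb x hx) (by linarith))
      (Real.rpow_nonneg (abs_nonneg _) _)
  refine ⟨h1, CP ^ (-((α + 1) / 2)), Real.rpow_pos_of_pos hCP _, ?_⟩
  have hI : 0 ≤ I :=
    intervalIntegral.integral_nonneg hab' fun x _ => Real.rpow_nonneg (abs_nonneg _) _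
  have hE : 0 ≤ E := by
    have : 0 ≤ ∫ x in a..b, (deriv u x) ^ 2 :=
      intervalIntegral.integral_nonneg hab' fun x _ => sq_nonneg _
    rw [hEdef]; linarith
  have hp : (0 : ℝ) < (α + 1) / 2 := by linarith
  have key : E ^ ((α + 1) / 2) ≤ CP ^ ((α + 1) / 2) * I := by
    have hexp : 2 / (α + 1) * ((α + 1) / 2) = 1 := by
      field_simp
    calc E ^ ((α + 1) / 2) ≤ (CP * I ^ (2 / (α + 1))) ^ ((α + 1) / 2) :=
          Real.rpow_le_rpow hE hP hp.le
      _ = CP ^ ((α + 1) / 2) * (I ^ (2 / (α + 1))) ^ ((α + 1) / 2) :=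
          Real.mul_rpow hCP.le (Real.rpow_nonneg hI _)
      _ = CP ^ ((α + 1) / 2) * I := by
          rw [← Real.rpow_mul hI, hexp, Real.rpow_one]
  have hinv : CP ^ (-((α + 1) / 2)) * CP ^ ((α + 1) / 2) = 1 := by
    rw [← Real.rpow_add hCP]; simp
  calc CP ^ (-((α + 1) / 2)) * m ^ (α + 2) * E ^ ((α + 1) / 2)
      ≤ CP ^ (-((α + 1) / 2)) * m ^ (α + 2) * (CP ^ ((α + 1) / 2) * I) := by
        apply mul_le_mul_of_nonneg_left key
        positivity
    _ = (CP ^ (-((α + 1) / 2)) * CP ^ ((α + 1) / 2)) * (m ^ (α + 2) * I) := by ring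
    _ = m ^ (α + 2) * I := by rw [hinv, one_mul]
    _ ≤ D := h1
end
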